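/- Let X = C([0,1], ℝ) with the supremum norm, and let h : ℝ → ℝ be a C^∞ function such that h(s) = s for |s| < 1/3, h(s) = 0 for |s| > 1/2, and |h(s)| ≤ 1/2 for all s, with all derivatives of h bounded. Then the function F : X → ℝ defined by F(x) = ∫₀¹ dt / (1 − h(x(t))) is well-defined and C^∞ on all of X, all of its iterated Fréchet derivatives are bounded on X, and F(x) = ∫₀¹ dt / (1 − x(t)) for every x ∈ X with ‖x‖ < 1/3. In particular, F is a global C^∞ representative of the germ at 0 of x ↦ ∫₀¹ dt/(1 − x(t)). -/

import Mathlib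

open MeasureTheory
open scoped ContDiff

set_option maxHeartbeats 1000000
set_option maxSynthPendingDepth 2

private lemma lip_of_deriv_bound {g : ℝ → ℝ} (hgd : Differentiable ℝ g) {C : ℝ}
    (hC : ∀ s, |deriv g s| ≤ C) (p q : ℝ) : |g p - g q| ≤ C * |p - q| := by
  have := Convex.norm_image_sub_le_of_norm_deriv_le (s := Set.univ) (fun s _ => hgd s)
    (fun s _ => by rw [Real.norm_eq_abs]; exact hC s) convex_univ (Set.mem_univ q) (Set.mem_univ p)
  simpa [Real.norm_eq_abs] using this

private lemma taylor_bound {g : ℝ → ℝ} (hgd : Differentiable ℝ g)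
    (hgd2 : Differentiable ℝ (deriv g)) {C : ℝ} (hC : ∀ s, |deriv (deriv g) s| ≤ C)
    (a u r : ℝ) (hu : |u| ≤ r) :
    |g (a + u) - g a - deriv g a * u| ≤ C * r * |u| := by
  have hr : 0 ≤ r := le_trans (abs_nonneg u) hu
  have hC0 : 0 ≤ C := le_trans (abs_nonneg _) (hC 0)
  set ψ : ℝ → ℝ := fun w => g (a + w) - deriv g a * w with hψdef
  have hψ : ∀ w, HasDerivAt ψ (deriv g (a + w) - deriv g a) w := by
    intro w
    have h1 : HasDerivAt (fun w => g (a + w)) (deriv g (a + w)) w := by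
      have := (hgd (a + w)).hasDerivAt.comp w ((hasDerivAt_id w).const_add a); rw [mul_one] at this; exact this
    have h2 : HasDerivAt (fun w => deriv g a * w) (deriv g a) w := by
      simpa using (hasDerivAt_id w).const_mul (deriv g a)
    exact h1.sub h2
  have key := Convex.norm_image_sub_le_of_norm_deriv_le (s := Set.Icc (-r) r) (f := ψ)
    (C := C * r) (fun w _ => (hψ w).differentiableAt)
    (fun w hw => by
      rw [(hψ w).deriv, Real.norm_eq_abs]
      have h3 : |deriv g (a + w) - deriv g a| ≤ C * |w| := by
        simpa using lip_of_deriv_bound hgd2 hC (a + w) a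
      refine h3.trans (mul_le_mul_of_nonneg_left ?_ hC0)
      exact abs_le.mpr ⟨hw.1, hw.2⟩)
    (convex_Icc _ _) (Set.mem_Icc.mpr ⟨neg_nonpos.mpr hr, hr⟩)
    (Set.mem_Icc.mpr (abs_le.mp hu))
  have hψ0 : ψ 0 = g a := by simp [hψdef]
  have hψu : ψ u = g (a + u) - deriv g a * u := rfl
  rw [hψu, hψ0, Real.norm_eq_abs, Real.norm_eq_abs, sub_zero] at key
  calc |g (a + u) - g a - deriv g a * u|
      = |g (a + u) - deriv g a * u - g a| := by ring_nf
    _ ≤ C * r * |u| := key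

private lemma nem_hasFDerivAt {g : ℝ → ℝ} (hg : ContDiff ℝ ∞ g) {C : ℝ}
    (hC : ∀ s, |deriv (deriv g) s| ≤ C) (x : C(unitInterval, ℝ)) :
    HasFDerivAt (fun y : C(unitInterval, ℝ) => (ContinuousMap.mk g hg.continuous).comp y)
      (ContinuousLinearMap.mul ℝ C(unitInterval, ℝ)
        ((ContinuousMap.mk (deriv g)
          ((contDiff_infty_iff_deriv.mp hg).2.continuous)).comp x)) x := by
  have hgd : Differentiable ℝ g := hg.differentiable (by simp)
  have hg' : ContDiff ℝ ∞ (deriv g) := (contDiff_infty_iff_deriv.mp hg).2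
  have hgd2 : Differentiable ℝ (deriv g) := hg'.differentiable (by simp)
  have hC0 : 0 ≤ C := le_trans (abs_nonneg _) (hC 0)
  rw [hasFDerivAt_iff_isLittleO_nhds_zero]
  have hlittle : (fun v : C(unitInterval, ℝ) => ‖v‖ * ‖v‖)
      =o[nhds 0] (fun v : C(unitInterval, ℝ) => v) := by
    rw [Asymptotics.isLittleO_iff]
    intro c hc
    filter_upwards [Metric.ball_mem_nhds (0 : C(unitInterval, ℝ)) hc] with v hv
    rw [Metric.mem_ball, dist_zero_right] at hv
    rw [Real.norm_of_nonneg (mul_nonneg (norm_nonneg v) (norm_nonneg v))]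
    exact mul_le_mul_of_nonneg_right hv.le (norm_nonneg v)
  refine (Asymptotics.isBigO_iff.mpr ⟨C, ?_⟩).trans_isLittleO hlittle
  filter_upwards with v
  rw [Real.norm_of_nonneg (mul_nonneg (norm_nonneg v) (norm_nonneg v)), ← mul_assoc]
  have hCv : 0 ≤ C * ‖v‖ := mul_nonneg hC0 (norm_nonneg v)
  refine (ContinuousMap.norm_le _ (mul_nonneg hCv (norm_nonneg v))).mpr fun t => ?_
  simp only [ContinuousMap.sub_apply, ContinuousMap.comp_apply, ContinuousMap.add_apply,
    ContinuousMap.coe_mk, ContinuousLinearMap.mul_apply', ContinuousMap.mul_apply,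
    Real.norm_eq_abs]
  calc |g (x t + v t) - g (x t) - deriv g (x t) * v t|
      ≤ C * ‖v‖ * |v t| := by
        refine taylor_bound hgd hgd2 hC (x t) (v t) ‖v‖ ?_
        simpa [Real.norm_eq_abs] using v.norm_coe_le_norm t
    _ ≤ C * ‖v‖ * ‖v‖ := by
        refine mul_le_mul_of_nonneg_left ?_ hCv
        simpa [Real.norm_eq_abs] using v.norm_coe_le_norm t

private lemma nem_main (n : ℕ) : ∀ (g : ℝ → ℝ) (hg : ContDiff ℝ ∞ g),
    (∀ k : ℕ, ∃ C : ℝ, ∀ s, |iteratedDeriv k g s| ≤ C) →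
    ContDiff ℝ n (fun y : C(unitInterval, ℝ) => (ContinuousMap.mk g hg.continuous).comp y) ∧
      ∃ C : ℝ, ∀ x : C(unitInterval, ℝ),
        ‖iteratedFDeriv ℝ n
          (fun y : C(unitInterval, ℝ) => (ContinuousMap.mk g hg.continuous).comp y) x‖ ≤ C := by
  induction n with
  | zero =>
    intro g hg hb
    obtain ⟨C₁, hC₁⟩ := hb 1
    rw [iteratedDeriv_one] at hC₁
    obtain ⟨C₀, hC₀⟩ := hb 0
    rw [iteratedDeriv_zero] at hC₀
    have hC₁0 : 0 ≤ C₁ := le_trans (abs_nonneg _) (hC₁ 0)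
    constructor
    · rw [show ((0 : ℕ) : WithTop ℕ∞) = 0 from by norm_cast, contDiff_zero]
      refine (LipschitzWith.of_dist_le_mul (K := ⟨C₁, hC₁0⟩) fun p q => ?_).continuous
      refine (ContinuousMap.dist_le (mul_nonneg hC₁0 dist_nonneg)).mpr fun t => ?_
      calc dist ((ContinuousMap.mk g hg.continuous).comp p t)
            ((ContinuousMap.mk g hg.continuous).comp q t)
          = |g (p t) - g (q t)| := Real.dist_eq _ _
        _ ≤ C₁ * |p t - q t| :=
            lip_of_deriv_bound (hg.differentiable (by simp)) hC₁ _ _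
        _ ≤ C₁ * dist p q := by
            rw [← Real.dist_eq]
            exact mul_le_mul_of_nonneg_left (ContinuousMap.dist_apply_le_dist t) hC₁0
    · refine ⟨C₀, fun x => ?_⟩
      rw [norm_iteratedFDeriv_zero]
      exact (ContinuousMap.norm_le _ (le_trans (abs_nonneg _) (hC₀ 0))).mpr fun t => by
        simpa [Real.norm_eq_abs] using hC₀ (x t)
  | succ n ih =>
    intro g hg hb
    have hg' : ContDiff ℝ ∞ (deriv g) := (contDiff_infty_iff_deriv.mp hg).2
    have hb' : ∀ k : ℕ, ∃ C : ℝ, ∀ s, |iteratedDeriv k (deriv g) s| ≤ C := by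
      intro k
      obtain ⟨C, hC⟩ := hb (k + 1)
      exact ⟨C, fun s => by rw [← iteratedDeriv_succ']; exact hC s⟩
    obtain ⟨C2, hC2⟩ := hb 2
    have hC2' : ∀ s, |deriv (deriv g) s| ≤ C2 := by
      intro s
      have h2 : iteratedDeriv 2 g = deriv (deriv g) := by
        rw [iteratedDeriv_succ', iteratedDeriv_one]
      rw [← h2]; exact hC2 s
    have hder : ∀ x : C(unitInterval, ℝ),
        HasFDerivAt (fun y : C(unitInterval, ℝ) => (ContinuousMap.mk g hg.continuous).comp y)
          (ContinuousLinearMap.mul ℝ C(unitInterval, ℝ)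
            ((ContinuousMap.mk (deriv g) hg'.continuous).comp x)) x :=
      fun x => nem_hasFDerivAt hg hC2' x
    have hfd : fderiv ℝ (fun y : C(unitInterval, ℝ) => (ContinuousMap.mk g hg.continuous).comp y)
        = fun x => ContinuousLinearMap.mul ℝ C(unitInterval, ℝ)
            ((ContinuousMap.mk (deriv g) hg'.continuous).comp x) :=
      funext fun x => (hder x).fderiv
    obtain ⟨ihc, C', hC'⟩ := ih (deriv g) hg' hb'
    constructor
    · have hcast : ((n + 1 : ℕ) : WithTop ℕ∞) = (n : WithTop ℕ∞) + 1 := by push_cast; ring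
      rw [hcast, contDiff_succ_iff_fderiv]
      refine ⟨fun x => (hder x).differentiableAt, ?_, ?_⟩
      · intro hω; exact absurd hω (by simp)
      · rw [hfd]
        have h1 : ContDiff ℝ (n : WithTop ℕ∞)
            (fun y : C(unitInterval, ℝ) => ContinuousLinearMap.mul ℝ C(unitInterval, ℝ) y) :=
          (ContinuousLinearMap.mul ℝ C(unitInterval, ℝ)).contDiff
        exact h1.comp ihc
    · refine ⟨C', fun x => ?_⟩
      rw [← norm_iteratedFDeriv_fderiv, hfd]
      have heq : ‖iteratedFDeriv ℝ n
            (⇑(ContinuousLinearMap.mulₗᵢ ℝ C(unitInterval, ℝ)) ∘ fun y : C(unitInterval, ℝ) =>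
              (ContinuousMap.mk (deriv g) hg'.continuous).comp y) x‖
          = ‖iteratedFDeriv ℝ n
            (fun y : C(unitInterval, ℝ) =>
              (ContinuousMap.mk (deriv g) hg'.continuous).comp y) x‖ :=
        (ContinuousLinearMap.mulₗᵢ ℝ C(unitInterval, ℝ)).norm_iteratedFDeriv_comp_left (ihc.contDiffAt (x := x)) le_rfl
      have hfun : (fun x : C(unitInterval, ℝ) => ContinuousLinearMap.mul ℝ C(unitInterval, ℝ)
          ((ContinuousMap.mk (deriv g) hg'.continuous).comp x))
          = (⇑(ContinuousLinearMap.mulₗᵢ ℝ C(unitInterval, ℝ)) ∘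
            fun y : C(unitInterval, ℝ) => (ContinuousMap.mk (deriv g) hg'.continuous).comp y) :=
        rfl
      rw [hfun, heq]
      exact hC' x

private lemma cm_integrable (x : C(unitInterval, ℝ)) :
    Integrable (fun t : unitInterval => x t) := by
  refine Integrable.mono' (integrable_const ‖x‖) x.continuous.aestronglyMeasurable ?_
  exact Filter.Eventually.of_forall fun t => x.norm_coe_le_norm t

private noncomputable def intCLM : C(unitInterval, ℝ) →L[ℝ] ℝ :=
  LinearMap.mkContinuous
    { toFun := fun x => ∫ t : unitInterval, x t
      map_add' := fun x y => by
        simp only [ContinuousMap.add_apply]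
        exact integral_add (cm_integrable x) (cm_integrable y)
      map_smul' := fun c x => by
        simp only [ContinuousMap.smul_apply, RingHom.id_apply, smul_eq_mul]
        exact integral_smul c fun t : unitInterval => x t }
    1 (fun x => by
      simp only [LinearMap.coe_mk, AddHom.coe_mk, one_mul]
      have := norm_integral_le_of_norm_le_const (μ := (volume : Measure unitInterval))
        (f := fun t : unitInterval => x t) (C := ‖x‖)
        (Filter.Eventually.of_forall fun t => x.norm_coe_le_norm t)
      simpa using this)

private lemma deriv_bounds_of_const_far {g : ℝ → ℝ} (hg : ContDiff ℝ ∞ g)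
    (hconst : ∀ s : ℝ, 1 / 2 < |s| → g s = 1) (hg0 : ∀ s, |g s| ≤ 2) :
    ∀ k : ℕ, ∃ C : ℝ, ∀ s, |iteratedDeriv k g s| ≤ C := by
  intro k
  match k with
  | 0 => exact ⟨2, fun s => by simpa [iteratedDeriv_zero] using hg0 s⟩
  | k + 1 =>
    have hcont : Continuous fun s => ‖iteratedFDeriv ℝ (k + 1) g s‖ :=
      (hg.continuous_iteratedFDeriv (by exact_mod_cast le_top)).norm
    obtain ⟨C, hC⟩ := (isCompact_Icc (a := (-1 : ℝ)) (b := 1)).exists_bound_of_continuousOn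
      hcont.continuousOn
    refine ⟨max C 0, fun s => ?_⟩
    have habs : |iteratedDeriv (k + 1) g s| = ‖iteratedFDeriv ℝ (k + 1) g s‖ := by
      rw [norm_iteratedFDeriv_eq_norm_iteratedDeriv, Real.norm_eq_abs]
    by_cases hs : |s| ≤ 1
    · have hmem : s ∈ Set.Icc (-1 : ℝ) 1 := Set.mem_Icc.mpr (abs_le.mp hs)
      have := hC s hmem
      rw [norm_norm] at this
      rw [habs]
      exact le_max_of_le_left this
    · have h2 : (1 : ℝ) / 2 < |s| := by linarith [not_le.mp hs]
      have hU : IsOpen {r : ℝ | 1 / 2 < |r|} := isOpen_lt continuous_const continuous_abs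
      have hsU : s ∈ {r : ℝ | 1 / 2 < |r|} := h2
      have hzero : iteratedFDeriv ℝ (k + 1) g s = 0 := by
        calc iteratedFDeriv ℝ (k + 1) g s
            = iteratedFDerivWithin ℝ (k + 1) g {r : ℝ | 1 / 2 < |r|} s :=
              (iteratedFDerivWithin_of_isOpen (k + 1) hU hsU).symm
          _ = iteratedFDerivWithin ℝ (k + 1) (fun _ => (1 : ℝ)) {r : ℝ | 1 / 2 < |r|} s :=
              Set.EqOn.iteratedFDerivWithin (fun r hr => hconst r hr) (k + 1) hsU
          _ = iteratedFDeriv ℝ (k + 1) (fun _ => (1 : ℝ)) s :=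
              iteratedFDerivWithin_of_isOpen (k + 1) hU hsU
          _ = 0 := by rw [iteratedFDeriv_const_of_ne (Nat.succ_ne_zero k)]; rfl
      rw [habs, hzero]
      simpa using le_max_right C 0

theorem integral_germ_global_representative
    (h : ℝ → ℝ) (hh : ContDiff ℝ (⊤ : ℕ∞) h)
    (hid : ∀ s : ℝ, |s| < 1 / 3 → h s = s)
    (hvanish : ∀ s : ℝ, 1 / 2 < |s| → h s = 0)
    (hbound : ∀ s : ℝ, |h s| ≤ 1 / 2)
    (hder : ∀ n : ℕ, ∃ C : ℝ, ∀ s : ℝ, |iteratedDeriv n h s| ≤ C)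
    (F : C(unitInterval, ℝ) → ℝ)
    (hF : ∀ x : C(unitInterval, ℝ), F x = ∫ t : unitInterval, (1 - h (x t))⁻¹) :
    ContDiff ℝ (⊤ : ℕ∞) F ∧
      (∀ n : ℕ, ∃ C : ℝ, ∀ x, ‖iteratedFDeriv ℝ n F x‖ ≤ C) ∧
      ∀ x : C(unitInterval, ℝ), ‖x‖ < 1 / 3 →
        F x = ∫ t : unitInterval, (1 - x t)⁻¹ := by
  have hh' : ContDiff ℝ ∞ h := hh
  set g : ℝ → ℝ := fun s => (1 - h s)⁻¹ with hgdef
  have hge : ∀ s, (1 : ℝ) / 2 ≤ 1 - h s := by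
    intro s
    have := (abs_le.mp (hbound s)).2
    linarith
  have hne : ∀ s, (1 : ℝ) - h s ≠ 0 := fun s => by linarith [hge s]
  have hg : ContDiff ℝ ∞ g := (contDiff_const.sub hh').inv hne
  have hconst : ∀ s : ℝ, 1 / 2 < |s| → g s = 1 := by
    intro s hs
    simp [hgdef, hvanish s hs]
  have hg0 : ∀ s, |g s| ≤ 2 := by
    intro s
    have hpos : 0 < 1 - h s := lt_of_lt_of_le (by norm_num) (hge s)
    rw [hgdef]
    rw [abs_of_pos (inv_pos.mpr hpos)]
    rw [show (2 : ℝ) = ((1 : ℝ) / 2)⁻¹ by norm_num]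
    exact inv_anti₀ (by norm_num) (hge s)
  have hbnds : ∀ k : ℕ, ∃ C : ℝ, ∀ s, |iteratedDeriv k g s| ≤ C :=
    deriv_bounds_of_const_far hg hconst hg0
  have hFeq : F = ⇑intCLM ∘ fun y : C(unitInterval, ℝ) =>
      (ContinuousMap.mk g hg.continuous).comp y := by
    funext x
    rw [hF x]
    rfl
  refine ⟨?_, ?_, ?_⟩
  · rw [hFeq]
    exact intCLM.contDiff.comp (contDiff_infty.mpr fun n => (nem_main n g hg hbnds).1)
  · intro n
    obtain ⟨C, hC⟩ := (nem_main n g hg hbnds).2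
    refine ⟨‖intCLM‖ * C, fun x => ?_⟩
    rw [hFeq]
    rw [intCLM.iteratedFDeriv_comp_left ((nem_main n g hg hbnds).1.contDiffAt (x := x)) le_rfl]
    calc ‖intCLM.compContinuousMultilinearMap (iteratedFDeriv ℝ n
          (fun y : C(unitInterval, ℝ) => (ContinuousMap.mk g hg.continuous).comp y) x)‖
        ≤ ‖intCLM‖ * ‖iteratedFDeriv ℝ n
            (fun y : C(unitInterval, ℝ) => (ContinuousMap.mk g hg.continuous).comp y) x‖ :=
          ContinuousLinearMap.norm_compContinuousMultilinearMap_le _ _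
      _ ≤ ‖intCLM‖ * C := mul_le_mul_of_nonneg_left (hC x) (ContinuousLinearMap.opNorm_nonneg intCLM)
  · intro x hx
    rw [hF x]
    have hpt : (fun t : unitInterval => (1 - h (x t))⁻¹)
        = fun t : unitInterval => (1 - x t)⁻¹ := by
      funext t
      have hlt : |x t| < 1 / 3 :=
        lt_of_le_of_lt (by simpa [Real.norm_eq_abs] using x.norm_coe_le_norm t) hx
      rw [hid (x t) hlt]
    rw [hpt]
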